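/- The width of the quasi-order T_f(2) of finite leaf-labelled trees over the two-element chain 0 < 1, ordered by tree homomorphisms, satisfies w(T_f(2)) ≥ ω + 1. -/

import Mathlib

universe u v

open Ordinal

/-- Incomparability in a quasi-order. -/
def IncompRelQO {Q : Type u} (le : Q → Q → Prop) (x y : Q) : Prop :=
  ¬ le x y ∧ ¬ le y x

/-- One step in building finite antichain sequences: `a` extends `b` by one element
incomparable with every element of `b`. -/
def WidthStep {Q : Type u} (le : Q → Q → Prop) (a b : List Q) : Prop :=
  ∃ x : Q, (∀ y ∈ b, IncompRelQO le x y) ∧ a = b ++ [x]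

open Classical in
/-- The width of a wqo, given by the recursion `w(Q) = sup_{x ∈ Q} (w(L_⊥(x)) + 1)`:
it is the rank of `[]` in the well-founded tree of finite antichain sequences, where the
rank of an antichain sequence `l` is `sup (rank (l ++ [x]) + 1)` over all `x`
incomparable with every element of `l` (the elements incomparable with all of `l` being
exactly the current suborder `L_⊥`). -/
noncomputable def widthQO {Q : Type u} (le : Q → Q → Prop) : Ordinal.{u} :=
  if h : WellFounded (WidthStep le) then (h.apply ([] : List Q)).rank else 0

/-- Finite leaf-labelled trees over `Q`: leaves carry labels from `Q`, and an internal
node carries a finite nonempty list of children (encoded as a head child plus the list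
of remaining children). -/
inductive LTree (Q : Type u) : Type u
  | leaf : Q → LTree Q
  | node : LTree Q → List (LTree Q) → LTree Q

mutual
/-- The tree-homomorphism quasi-order `≤_T` on finite leaf-labelled trees:
`·x ≤_T ·y` iff `le x y`; `·x ≤_T ·(τ₀,…,τ_{l-1})` iff `·x ≤_T τ_j` for some `j < l`;
`·(σ₀,…,σ_{k-1}) ≤_T ·(τ₀,…,τ_{l-1})` iff for every `i < k` there is `j < l` with
`σᵢ ≤_T τ_j`; and `·(σ₀,…,σ_{k-1}) ≤_T ·y` never holds. -/
inductive TreeLE {Q : Type u} (le : Q → Q → Prop) : LTree Q → LTree Q → Prop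
  | leaf {x y : Q} : le x y → TreeLE le (.leaf x) (.leaf y)
  | leafNode {x : Q} {t : LTree Q} {ts : List (LTree Q)} :
      TreeMemLE le (.leaf x) (t :: ts) → TreeLE le (.leaf x) (.node t ts)
  | node {s t : LTree Q} {ss ts : List (LTree Q)} :
      TreeAllLE le (s :: ss) (t :: ts) → TreeLE le (.node s ss) (.node t ts)

/-- `TreeMemLE le a l` means `∃ b ∈ l, TreeLE le a b`. -/
inductive TreeMemLE {Q : Type u} (le : Q → Q → Prop) : LTree Q → List (LTree Q) → Prop
  | head {a b : LTree Q} {l : List (LTree Q)} : TreeLE le a b → TreeMemLE le a (b :: l)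
  | tail {a b : LTree Q} {l : List (LTree Q)} : TreeMemLE le a l → TreeMemLE le a (b :: l)

/-- `TreeAllLE le l₁ l₂` means `∀ a ∈ l₁, ∃ b ∈ l₂, TreeLE le a b`. -/
inductive TreeAllLE {Q : Type u} (le : Q → Q → Prop) : List (LTree Q) → List (LTree Q) → Prop
  | nil {l : List (LTree Q)} : TreeAllLE le [] l
  | cons {a : LTree Q} {l₁ l₂ : List (LTree Q)} :
      TreeMemLE le a l₂ → TreeAllLE le l₁ l₂ → TreeAllLE le (a :: l₁) l₂
end

namespace WidthAux

variable {Q : Type u} {le : Q → Q → Prop}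

mutual
def tsize {Q : Type u} : LTree Q → ℕ
  | .leaf _ => 1
  | .node t ts => tsizeL ts + tsize t + 1
def tsizeL {Q : Type u} : List (LTree Q) → ℕ
  | [] => 0
  | t :: ts => tsize t + tsizeL ts
end

theorem tsize_pos : ∀ t : LTree Q, 0 < tsize t
  | .leaf _ => by simp [tsize]
  | .node _ _ => by simp [tsize]

theorem tsize_le_of_mem {t : LTree Q} : ∀ {l : List (LTree Q)}, t ∈ l → tsize t ≤ tsizeL l
  | a :: l, h => by
    rcases List.mem_cons.1 h with rfl | h
    · simp [tsizeL]
    · have := tsize_le_of_mem h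
      simp [tsizeL]; omega

theorem tsize_lt_of_mem {t c : LTree Q} {cs : List (LTree Q)} (h : t ∈ c :: cs) :
    tsize t < tsize (LTree.node c cs) := by
  rcases List.mem_cons.1 h with rfl | h
  · simp [tsize]
  · have := tsize_le_of_mem h
    simp [tsize, tsizeL]; omega

theorem treeMemLE_iff {a : LTree Q} {l : List (LTree Q)} :
    TreeMemLE le a l ↔ ∃ b ∈ l, TreeLE le a b := by
  constructor
  · intro h
    induction l with
    | nil => cases h
    | cons c l ih =>
      cases h with
      | head h => exact ⟨_, List.mem_cons_self .., h⟩
      | tail h => obtain ⟨b, hb, h⟩ := ih h; exact ⟨b, List.mem_cons_of_mem _ hb, h⟩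
  · rintro ⟨b, hb, h⟩
    induction l with
    | nil => cases hb
    | cons c l ih =>
      rcases List.mem_cons.1 hb with rfl | hb
      · exact .head h
      · exact .tail (ih hb)

theorem treeAllLE_iff {l₁ l₂ : List (LTree Q)} :
    TreeAllLE le l₁ l₂ ↔ ∀ a ∈ l₁, ∃ b ∈ l₂, TreeLE le a b := by
  constructor
  · intro h
    induction l₁ with
    | nil => simp
    | cons c l ih =>
      cases h with
      | cons h h' =>
        intro a ha
        rcases List.mem_cons.1 ha with rfl | ha
        · exact treeMemLE_iff.1 h
        · exact ih h' a ha
  · intro h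
    induction l₁ with
    | nil => exact .nil
    | cons a l ih =>
      exact .cons (treeMemLE_iff.2 (h a (List.mem_cons_self ..)))
        (ih fun a ha => h a (List.mem_cons_of_mem _ ha))

theorem node_le_node_iff {s t : LTree Q} {ss ts : List (LTree Q)} :
    TreeLE le (.node s ss) (.node t ts) ↔ ∀ a ∈ s :: ss, ∃ b ∈ t :: ts, TreeLE le a b := by
  constructor
  · rintro (_ | _ | ⟨h⟩); exact treeAllLE_iff.1 h
  · intro h; exact .node (treeAllLE_iff.2 h)

theorem leaf_le_node_iff {x : Q} {t : LTree Q} {ts : List (LTree Q)} :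
    TreeLE le (.leaf x) (.node t ts) ↔ ∃ b ∈ t :: ts, TreeLE le (.leaf x) b := by
  constructor
  · rintro (_ | ⟨h⟩); exact treeMemLE_iff.1 h
  · intro h; exact .leafNode (treeMemLE_iff.2 h)

theorem leaf_le_leaf_iff {x y : Q} : TreeLE le (.leaf x) (.leaf y) ↔ le x y := by
  constructor
  · rintro (⟨h⟩); assumption
  · exact .leaf

theorem not_node_le_leaf {s : LTree Q} {ss : List (LTree Q)} {y : Q} :
    ¬ TreeLE le (.node s ss) (.leaf y) := by rintro (_ | _ | _)

end WidthAux

namespace WidthAux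

variable {Q : Type u} {le : Q → Q → Prop}

theorem treeLE_refl (hrefl : ∀ a, le a a) : ∀ t : LTree Q, TreeLE le t t := by
  suffices h : ∀ n (t : LTree Q), tsize t ≤ n → TreeLE le t t from fun t => h _ t le_rfl
  intro n
  induction n using Nat.strong_induction_on with
  | _ n ih =>
  intro t hn
  cases t with
  | leaf x => exact .leaf (hrefl x)
  | node c cs =>
    refine node_le_node_iff.2 fun a ha => ⟨a, ha, ?_⟩
    have := tsize_lt_of_mem ha
    exact ih (tsize a) (by omega) a le_rfl

theorem treeLE_trans (htrans : ∀ a b c, le a b → le b c → le a c) :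
    ∀ a b c : LTree Q, TreeLE le a b → TreeLE le b c → TreeLE le a c := by
  suffices h : ∀ n (a b c : LTree Q), tsize c ≤ n →
      TreeLE le a b → TreeLE le b c → TreeLE le a c from
    fun a b c => h _ a b c le_rfl
  intro n
  induction n using Nat.strong_induction_on with
  | _ n ih =>
  intro a b c hn hab hbc
  cases c with
  | leaf z =>
    cases b with
    | leaf y =>
      cases a with
      | leaf x =>
        exact .leaf (htrans _ _ _ (leaf_le_leaf_iff.1 hab) (leaf_le_leaf_iff.1 hbc))
      | node s ss => exact absurd hab not_node_le_leaf
    | node t ts => exact absurd hbc not_node_le_leaf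
  | node t ts =>
    cases b with
    | leaf y =>
      cases a with
      | leaf x =>
        obtain ⟨v, hv, hyv⟩ := leaf_le_node_iff.1 hbc
        have := tsize_lt_of_mem hv
        exact leaf_le_node_iff.2 ⟨v, hv, ih (tsize v) (by omega) _ _ v le_rfl hab hyv⟩
      | node s ss => exact absurd hab not_node_le_leaf
    | node u us =>
      cases a with
      | leaf x =>
        obtain ⟨w, hw, hxw⟩ := leaf_le_node_iff.1 hab
        obtain ⟨v, hv, hwv⟩ := node_le_node_iff.1 hbc w hw
        have := tsize_lt_of_mem hv
        exact leaf_le_node_iff.2 ⟨v, hv, ih (tsize v) (by omega) _ _ v le_rfl hxw hwv⟩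
      | node s ss =>
        refine node_le_node_iff.2 fun p hp => ?_
        obtain ⟨w, hw, hpw⟩ := node_le_node_iff.1 hab p hp
        obtain ⟨v, hv, hwv⟩ := node_le_node_iff.1 hbc w hw
        have := tsize_lt_of_mem hv
        exact ⟨v, hv, ih (tsize v) (by omega) _ _ v le_rfl hpw hwv⟩

theorem le_node_of_mem (hrefl : ∀ a, le a a) :
    ∀ (t : LTree Q) {c : LTree Q} {cs : List (LTree Q)}, t ∈ c :: cs →
      TreeLE le t (.node c cs) := by
  suffices h : ∀ n (t : LTree Q) (c : LTree Q) (cs : List (LTree Q)), tsize t ≤ n →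
      t ∈ c :: cs → TreeLE le t (.node c cs) from
    fun t _ _ ht => h _ t _ _ le_rfl ht
  intro n
  induction n using Nat.strong_induction_on with
  | _ n ih =>
  intro t c cs hn ht
  cases t with
  | leaf x => exact leaf_le_node_iff.2 ⟨_, ht, .leaf (hrefl x)⟩
  | node s ss =>
    refine node_le_node_iff.2 fun a ha => ⟨.node s ss, ht, ?_⟩
    have := tsize_lt_of_mem ha
    exact ih (tsize a) (by omega) a s ss le_rfl ha

theorem treeAllLE_of_sublistForall₂ {l₁ l₂ : List (LTree Q)}
    (h : List.SublistForall₂ (TreeLE le) l₁ l₂) : ∀ a ∈ l₁, ∃ b ∈ l₂, TreeLE le a b := by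
  rw [List.sublistForall₂_iff] at h
  obtain ⟨l, hl, hsub⟩ := h
  intro a ha
  obtain ⟨i, hi, rfl⟩ := List.mem_iff_get.1 ha
  have hlen := List.Forall₂.length_eq hl
  refine ⟨l.get ⟨i, by omega⟩, hsub.mem (List.get_mem ..), ?_⟩
  exact (List.forall₂_iff_get.1 hl).2 i i.2 (by omega)

end WidthAux

namespace WidthAux

abbrev BLE : LTree Bool → LTree Bool → Prop := TreeLE ((· ≤ ·) : Bool → Bool → Prop)

theorem ble_refl (t : LTree Bool) : BLE t t := treeLE_refl (fun a => le_refl a) t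

theorem ble_trans {a b c : LTree Bool} (h1 : BLE a b) (h2 : BLE b c) : BLE a c :=
  treeLE_trans (le := ((· ≤ ·) : Bool → Bool → Prop)) (fun _ _ _ h h' => le_trans h h') a b c h1 h2

instance : IsRefl (LTree Bool) BLE := ⟨ble_refl⟩
instance : IsTrans (LTree Bool) BLE := ⟨fun _ _ _ => ble_trans⟩
instance : IsPreorder (LTree Bool) BLE where

theorem pwo_bool : (Set.univ : Set (LTree Bool)).PartiallyWellOrderedOn BLE := by
  rw [Set.PartiallyWellOrderedOn.iff_not_exists_isMinBadSeq tsize]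
  rintro ⟨f, hf, hmin⟩
  classical
  -- The set of children of terms of `f` is partially well ordered.
  set S : Set (LTree Bool) := {t | ∃ n c cs, f n = LTree.node c cs ∧ t ∈ c :: cs} with hSdef
  have hS : S.PartiallyWellOrderedOn BLE := by
    rw [Set.PartiallyWellOrderedOn.iff_forall_not_isBadSeq]
    rintro g ⟨hgS, hgbad⟩
    choose nn cc ccs hfn hmem using hgS
    obtain ⟨k0, hk0⟩ : ∃ k0, ∀ k, nn k0 ≤ nn k := by
      obtain ⟨m, hmem', hm⟩ := Nat.lt_wfRel.wf.has_min (Set.range nn) ⟨nn 0, 0, rfl⟩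
      obtain ⟨k0, rfl⟩ := hmem'
      exact ⟨k0, fun k => not_lt.1 (hm (nn k) ⟨k, rfl⟩)⟩
    have gle : ∀ k, BLE (g k) (f (nn k)) := by
      intro k
      rw [hfn k]
      exact le_node_of_mem (fun a => le_refl a) _ (hmem k)
    set h : ℕ → LTree Bool := fun i => if i < nn k0 then f i else g (k0 + (i - nn k0)) with hh
    have hnk0 : h (nn k0) = g k0 := by simp [hh]
    refine hmin (nn k0) h (fun m hm => (if_pos hm).symm) ?_ ⟨fun _ => trivial, ?_⟩
    · rw [hnk0, hfn k0]
      exact tsize_lt_of_mem (hmem k0)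
    · intro i j hij hle
      by_cases hi : i < nn k0
      · by_cases hj : j < nn k0
        · rw [hh] at hle; simp only [if_pos hi, if_pos hj] at hle
          exact hf.2 i j hij hle
        · rw [hh] at hle; simp only [if_pos hi, if_neg hj] at hle
          have : BLE (f i) (f (nn (k0 + (j - nn k0)))) := ble_trans hle (gle _)
          exact hf.2 i (nn (k0 + (j - nn k0))) (lt_of_lt_of_le hi (hk0 _)) this
      · have hj : ¬ j < nn k0 := fun hj => hi (hij.trans hj)
        rw [hh] at hle; simp only [if_neg hi, if_neg hj] at hle
        exact hgbad (k0 + (i - nn k0)) (k0 + (j - nn k0)) (by omega) hle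
  -- Beyond some point, all terms of `f` are nodes.
  obtain ⟨M, hM⟩ : ∃ M, ∀ n, M ≤ n → ∃ c cs, f n = LTree.node c cs := by
    by_contra hcon
    push_neg at hcon
    have leafy : ∀ M, ∃ n, M ≤ n ∧ ∃ b, f n = LTree.leaf b := by
      intro M
      obtain ⟨n, hn, hnode⟩ := hcon M
      refine ⟨n, hn, ?_⟩
      cases hfn : f n with
      | leaf b => exact ⟨b, rfl⟩
      | node c cs => exact absurd hfn (hnode c cs)
    obtain ⟨i, -, b1, hb1⟩ := leafy 0
    obtain ⟨j, hj, b2, hb2⟩ := leafy (i + 1)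
    obtain ⟨k, hk, b3, hb3⟩ := leafy (j + 1)
    have h12 : ¬ (b1 ≤ b2) := by
      intro hle
      exact hf.2 i j (by omega) (by rw [hb1, hb2]; exact .leaf hle)
    have h23 : ¬ (b2 ≤ b3) := by
      intro hle
      exact hf.2 j k (by omega) (by rw [hb2, hb3]; exact .leaf hle)
    cases b2
    · exact h23 (Bool.false_le _)
    · exact h12 (Bool.le_true _)
  choose cc ccs hfn using hM
  have hL := hS.partiallyWellOrderedOn_sublistForall₂ (r := BLE)
  obtain ⟨i, j, hij, hle⟩ := hL (fun n => ⟨cc (M + n) (by omega) :: ccs (M + n) (by omega),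
    (by
      intro x hx
      exact ⟨M + n, _, _, hfn (M + n) (by omega), hx⟩)⟩)
  have : BLE (f (M + i)) (f (M + j)) := by
    rw [hfn (M + i) (by omega), hfn (M + j) (by omega)]
    exact node_le_node_iff.2 (treeAllLE_of_sublistForall₂ hle)
  exact hf.2 (M + i) (M + j) (by omega) this

end WidthAux

namespace WidthAux

theorem wf_widthStep_bool : WellFounded (WidthStep BLE) := by
  classical
  constructor
  intro l0
  by_contra h0
  have key : ∀ l : List (LTree Bool), ¬ Acc (WidthStep BLE) l →
      ∃ l', WidthStep BLE l' l ∧ ¬ Acc (WidthStep BLE) l' := by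
    intro l h
    by_contra hcon
    push_neg at hcon
    exact h (Acc.intro l fun y hy => hcon y hy)
  let F : ℕ → {l : List (LTree Bool) // ¬ Acc (WidthStep BLE) l} :=
    Nat.rec ⟨l0, h0⟩ fun _ p =>
      ⟨Classical.choose (key p.1 p.2), (Classical.choose_spec (key p.1 p.2)).2⟩
  set φ : ℕ → List (LTree Bool) := fun n => (F n).1 with hφ
  have hstep : ∀ n : ℕ, WidthStep BLE (φ (n + 1)) (φ n) := fun n =>
    (Classical.choose_spec (key (F n).1 (F n).2)).1
  choose x hx hxeq using hstep
  have hpref : ∀ i j : ℕ, i ≤ j → φ i <+: φ j := by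
    intro i j hij
    induction j with
    | zero => rw [Nat.le_zero.1 hij]
    | succ j ih =>
      by_cases h : i ≤ j
      · exact (ih h).trans (by rw [hxeq j]; exact List.prefix_append _ _)
      · have : i = j + 1 := by omega
        rw [this]
  have hmem : ∀ i j : ℕ, i < j → x i ∈ φ j := by
    intro i j hij
    have h1 : x i ∈ φ (i + 1) := by
      rw [hxeq i]; exact List.mem_append_right _ (List.mem_singleton_self _)
    exact (hpref (i + 1) j hij).subset h1
  obtain ⟨i, j, hij, hle⟩ := pwo_bool (fun n => ⟨x n, trivial⟩)
  exact (hx j (x i) (hmem i j hij)).2 hle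

end WidthAux

namespace WidthAux

/-- `Ch b k`: the chain of height `k` with a leaf labelled `b` at the bottom. -/
def Ch (b : Bool) : ℕ → LTree Bool
  | 0 => .leaf b
  | k + 1 => .node (Ch b k) []

theorem node_single_le_node_iff {s t : LTree Bool} {ts : List (LTree Bool)} :
    BLE (.node s []) (.node t ts) ↔ ∃ b ∈ t :: ts, BLE s b :=
  node_le_node_iff.trans (by simp)

theorem node_pair_le_node_iff {s s' t : LTree Bool} {ts : List (LTree Bool)} :
    BLE (.node s [s']) (.node t ts) ↔ (∃ b ∈ t :: ts, BLE s b) ∧ ∃ b ∈ t :: ts, BLE s' b := by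
  refine node_le_node_iff.trans ?_
  constructor
  · intro h; exact ⟨h s (by simp), h s' (by simp)⟩
  · rintro ⟨h1, h2⟩ a ha
    rcases List.mem_cons.1 ha with rfl | ha
    · exact h1
    · simp at ha; subst ha; exact h2

theorem chain_le_chain_iff {b b' : Bool} {k j : ℕ} :
    BLE (Ch b k) (Ch b' j) ↔ k ≤ j ∧ b ≤ b' := by
  induction k generalizing j with
  | zero =>
    simp only [Nat.zero_le, true_and]
    induction j with
    | zero => exact leaf_le_leaf_iff
    | succ j ihj =>
      show BLE (.leaf b) (.node (Ch b' j) []) ↔ b ≤ b'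
      refine (leaf_le_node_iff.trans ?_).trans ihj
      simp only [List.mem_cons, List.not_mem_nil, or_false, exists_eq_left]
      exact Iff.rfl
  | succ k ihk =>
    cases j with
    | zero =>
      show BLE (.node (Ch b k) []) (.leaf b') ↔ _
      simp only [show ¬ k + 1 ≤ 0 by omega, false_and, iff_false]
      exact not_node_le_leaf
    | succ j =>
      show BLE (.node (Ch b k) []) (.node (Ch b' j) []) ↔ _
      refine node_single_le_node_iff.trans ?_
      simp only [List.mem_cons, List.not_mem_nil, or_false, exists_eq_left]
      rw [ihk]
      constructor
      · rintro ⟨h1, h2⟩; exact ⟨by omega, h2⟩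
      · rintro ⟨h1, h2⟩; exact ⟨by omega, h2⟩

/-- The gadget `W = ·(·1, g₂)`. -/
def Wg : LTree Bool := .node (.leaf true) [Ch false 2]

def Cg (k : ℕ) : LTree Bool := .node (Ch true 2) [Ch false (k + 3)]

def Dg (k : ℕ) : LTree Bool := .node Wg [Ch false (k + 3)]

theorem not_chT_le_chF {k j : ℕ} : ¬ BLE (Ch true k) (Ch false j) := fun h =>
  absurd (chain_le_chain_iff.1 h).2 (by simp)

theorem not_HS_le_W {k : ℕ} : ¬ BLE (Ch true (k + 2)) Wg := by
  intro h
  obtain ⟨c, hc, h⟩ :=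
    (node_single_le_node_iff (s := Ch true (k + 1)) (t := LTree.leaf true)
      (ts := [Ch false 2])).1 h
  rcases List.mem_cons.1 hc with rfl | hc
  · exact not_node_le_leaf (s := Ch true k) (ss := []) h
  · simp at hc; subst hc; exact not_chT_le_chF h

theorem not_W_le_chT {j : ℕ} (hj : j ≤ 2) : ¬ BLE Wg (Ch true j) := by
  intro h
  cases j with
  | zero => exact not_node_le_leaf (le := ((· ≤ ·) : Bool → Bool → Prop)) h
  | succ j =>
    obtain ⟨-, c, hc, h2⟩ :=
      (node_pair_le_node_iff (s := LTree.leaf true) (s' := Ch false 2)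
        (t := Ch true j) (ts := [])).1 h
    simp at hc; subst hc
    have := (chain_le_chain_iff.1 h2).1
    omega

theorem not_W_le_chF {j : ℕ} : ¬ BLE Wg (Ch false j) := by
  intro h
  cases j with
  | zero => exact not_node_le_leaf (le := ((· ≤ ·) : Bool → Bool → Prop)) h
  | succ j =>
    obtain ⟨⟨c, hc, h1⟩, -⟩ :=
      (node_pair_le_node_iff (s := LTree.leaf true) (s' := Ch false 2)
        (t := Ch false j) (ts := [])).1 h
    simp at hc; subst hc
    exact not_chT_le_chF (k := 0) h1

theorem not_chF_le_W {m : ℕ} (hm : 4 ≤ m) : ¬ BLE (Ch false m) Wg := by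
  intro h
  obtain ⟨m', rfl⟩ : ∃ m', m = m' + 1 := ⟨m - 1, by omega⟩
  obtain ⟨c, hc, h⟩ :=
    (node_single_le_node_iff (s := Ch false m') (t := LTree.leaf true)
      (ts := [Ch false 2])).1 h
  rcases List.mem_cons.1 hc with rfl | hc
  · have := ((chain_le_chain_iff (j := 0)).1 h).1; omega
  · simp at hc; subst hc
    have := (chain_le_chain_iff.1 h).1; omega

theorem W_le_W : BLE Wg Wg := ble_refl _

theorem Cg_le_Cg_iff {k j : ℕ} : BLE (Cg k) (Cg j) ↔ k ≤ j := by
  constructor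
  · intro h
    obtain ⟨-, c, hc, h2⟩ := node_pair_le_node_iff.1 h
    rcases List.mem_cons.1 hc with rfl | hc
    · have := (chain_le_chain_iff.1 h2).1; omega
    · simp at hc; subst hc
      have := (chain_le_chain_iff.1 h2).1; omega
  · intro h
    exact node_pair_le_node_iff.2 ⟨⟨Ch true 2, by simp, ble_refl _⟩,
      ⟨Ch false (j + 3), by simp, chain_le_chain_iff.2 ⟨by omega, le_rfl⟩⟩⟩

theorem Dg_le_Dg_iff {k j : ℕ} : BLE (Dg k) (Dg j) ↔ k ≤ j ∨ k = 0 := by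
  constructor
  · intro h
    obtain ⟨-, c, hc, h2⟩ := node_pair_le_node_iff.1 h
    rcases List.mem_cons.1 hc with rfl | hc
    · by_contra hcon
      exact not_chF_le_W (by omega) h2
    · simp at hc; subst hc
      have := (chain_le_chain_iff.1 h2).1; left; omega
  · intro h
    rcases h with h | rfl
    swap
    · refine node_pair_le_node_iff.2 ⟨⟨Wg, by simp, W_le_W⟩, ⟨Wg, by simp, ?_⟩⟩
      show BLE (.node (Ch false 2) []) Wg
      exact node_single_le_node_iff.2 ⟨Ch false 2, by simp, ble_refl _⟩
    exact node_pair_le_node_iff.2 ⟨⟨Wg, by simp, W_le_W⟩,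
      ⟨Ch false (j + 3), by simp, chain_le_chain_iff.2 ⟨by omega, le_rfl⟩⟩⟩

theorem not_Cg_le_Dg {k j : ℕ} : ¬ BLE (Cg k) (Dg j) := by
  intro h
  obtain ⟨⟨c, hc, h1⟩, -⟩ := node_pair_le_node_iff.1 h
  rcases List.mem_cons.1 hc with rfl | hc
  · exact not_HS_le_W h1
  · simp at hc; subst hc; exact not_chT_le_chF h1

theorem not_Dg_le_Cg {k j : ℕ} : ¬ BLE (Dg k) (Cg j) := by
  intro h
  obtain ⟨⟨c, hc, h1⟩, -⟩ := node_pair_le_node_iff.1 h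
  rcases List.mem_cons.1 hc with rfl | hc
  · exact not_W_le_chT le_rfl h1
  · simp at hc; subst hc; exact not_W_le_chF h1

/-- The antichain element `T n k = ·(C k, D (n-k))`. -/
def Tg (n k : ℕ) : LTree Bool := .node (Cg k) [Dg (n - k)]

/-- The fixed element `x = h₅`, the pure chain of `1`s of height 5. -/
def Xg : LTree Bool := Ch true 5

theorem Tg_le_Tg_iff {n k j : ℕ} (hk : k ≤ n) (hj : j ≤ n) :
    BLE (Tg n k) (Tg n j) ↔ k = j := by
  constructor
  · intro h
    obtain ⟨⟨c, hc, h1⟩, c', hc', h2⟩ := node_pair_le_node_iff.1 h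
    rcases List.mem_cons.1 hc with rfl | hc
    · have hkj := Cg_le_Cg_iff.1 h1
      rcases List.mem_cons.1 hc' with rfl | hc'
      · exact absurd h2 not_Dg_le_Cg
      · simp at hc'; subst hc'
        have := Dg_le_Dg_iff.1 h2; omega
    · simp at hc; subst hc; exact absurd h1 not_Cg_le_Dg
  · rintro rfl
    exact node_pair_le_node_iff.2
      ⟨⟨Cg k, by simp, Cg_le_Cg_iff.2 le_rfl⟩,
        ⟨Dg (n - k), by simp, Dg_le_Dg_iff.2 (Or.inl le_rfl)⟩⟩

theorem not_Xg_le_Tg {n k : ℕ} : ¬ BLE Xg (Tg n k) := by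
  intro h
  obtain ⟨c, hc, h1⟩ :=
    (node_single_le_node_iff (s := Ch true 4) (t := Cg k) (ts := [Dg (n - k)])).1 h
  rcases List.mem_cons.1 hc with rfl | hc
  · obtain ⟨c', hc', h2⟩ :=
      (node_single_le_node_iff (s := Ch true 3) (t := Ch true 2)
        (ts := [Ch false (k + 3)])).1 h1
    rcases List.mem_cons.1 hc' with rfl | hc'
    · have := (chain_le_chain_iff.1 h2).1; omega
    · simp at hc'; subst hc'; exact not_chT_le_chF h2
  · simp at hc; subst hc
    obtain ⟨c', hc', h2⟩ :=
      (node_single_le_node_iff (s := Ch true 3) (t := Wg)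
        (ts := [Ch false (n - k + 3)])).1 h1
    rcases List.mem_cons.1 hc' with rfl | hc'
    · exact not_HS_le_W h2
    · simp at hc'; subst hc'; exact not_chT_le_chF h2

theorem not_Tg_le_Xg {n k : ℕ} (hk : 1 ≤ k) : ¬ BLE (Tg n k) Xg := by
  intro h
  obtain ⟨⟨c, hc, h1⟩, -⟩ :=
    (node_pair_le_node_iff (s := Cg k) (s' := Dg (n - k)) (t := Ch true 4) (ts := [])).1 h
  simp only [List.mem_cons, List.not_mem_nil, or_false] at hc; subst hc
  obtain ⟨-, c', hc', h2⟩ :=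
    (node_pair_le_node_iff (s := Ch true 2) (s' := Ch false (k + 3))
      (t := Ch true 3) (ts := [])).1 h1
  simp only [List.mem_cons, List.not_mem_nil, or_false] at hc'; subst hc'
  have := (chain_le_chain_iff.1 h2).1
  omega

theorem incomp_Tg_Xg {n k : ℕ} (hk : 1 ≤ k) : IncompRelQO BLE (Tg n k) Xg :=
  ⟨not_Tg_le_Xg hk, not_Xg_le_Tg⟩

theorem incomp_Tg_Tg {n k j : ℕ} (hk : k ≤ n) (hj : j ≤ n) (hne : k ≠ j) :
    IncompRelQO BLE (Tg n k) (Tg n j) :=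
  ⟨fun h => hne ((Tg_le_Tg_iff hk hj).1 h), fun h => hne (((Tg_le_Tg_iff hj hk).1 h).symm)⟩

end WidthAux

namespace WidthAux

theorem rank_lt_of_widthStep (hw : WellFounded (WidthStep BLE)) {a b : List (LTree Bool)}
    (h : WidthStep BLE a b) : (hw.apply a).rank < (hw.apply b).rank :=
  Acc.rank_lt_of_rel (hw.apply b) h

theorem nat_le_rank (hw : WellFounded (WidthStep BLE)) :
    ∀ (ys l : List (LTree Bool)), List.Pairwise (IncompRelQO BLE) ys →
      (∀ y ∈ ys, ∀ z ∈ l, IncompRelQO BLE y z) →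
      (ys.length : Ordinal) ≤ (hw.apply l).rank := by
  intro ys
  induction ys with
  | nil => simp
  | cons y ys ih =>
    intro l hpair hcross
    have step : WidthStep BLE (l ++ [y]) l := ⟨y, fun z hz => hcross y (by simp) z hz, rfl⟩
    have h1 := rank_lt_of_widthStep hw step
    have h2 : (ys.length : Ordinal) ≤ (hw.apply (l ++ [y])).rank := by
      refine ih (l ++ [y]) (List.pairwise_cons.1 hpair).2 ?_
      intro y' hy' z hz
      rcases List.mem_append.1 hz with hz | hz
      · exact hcross y' (by simp [hy']) z hz
      · simp only [List.mem_singleton] at hz; subst hz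
        have := (List.pairwise_cons.1 hpair).1 y' hy'
        exact ⟨this.2, this.1⟩
    have hlen : (((y :: ys).length : ℕ) : Ordinal) = (ys.length : Ordinal) + 1 := by
      simp
    rw [hlen, Order.add_one_le_iff]
    exact lt_of_le_of_lt h2 h1

theorem main : omega0 + 1 ≤ widthQO BLE := by
  have hw := wf_widthStep_bool
  unfold widthQO
  rw [dif_pos hw]
  have hX : ∀ n : ℕ, (n : Ordinal) ≤ (hw.apply [Xg]).rank := by
    intro n
    have hlen : ((List.range n).map fun i => Tg n (i + 1)).length = n := by simp
    have hpair : List.Pairwise (IncompRelQO BLE) ((List.range n).map fun i => Tg n (i + 1)) := by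
      rw [List.pairwise_map]
      refine ((List.pairwise_lt_range (n := n)).imp_of_mem ?_)
      intro a b ha hb hab
      rw [List.mem_range] at ha hb
      exact incomp_Tg_Tg (by omega) (by omega) (by omega)
    have hcross : ∀ y ∈ (List.range n).map fun i => Tg n (i + 1),
        ∀ z ∈ [Xg], IncompRelQO BLE y z := by
      intro y hy z hz
      simp only [List.mem_singleton] at hz; subst hz
      obtain ⟨i, hi, rfl⟩ := List.mem_map.1 hy
      exact incomp_Tg_Xg (by omega)
    have := nat_le_rank hw _ [Xg] hpair hcross
    rwa [hlen] at this
  have hωX : omega0 ≤ (hw.apply [Xg]).rank := Ordinal.omega0_le.2 hX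
  have hstep : WidthStep BLE [Xg] [] := ⟨Xg, by simp, rfl⟩
  have hlt := rank_lt_of_widthStep hw hstep
  calc omega0 + 1 ≤ (hw.apply [Xg]).rank + 1 := add_le_add_left hωX 1
    _ ≤ (hw.apply ([] : List (LTree Bool))).rank := Order.add_one_le_iff.2 hlt

end WidthAux


/-- The width of the quasi-order `T_f(2)` of finite leaf-labelled trees over the
two-element chain `false < true`, ordered by tree homomorphisms, is at least `ω + 1`. -/
theorem omega0_add_one_le_width_treeLE_bool :
    omega0 + 1 ≤ widthQO (TreeLE ((· ≤ ·) : Bool → Bool → Prop)) :=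
  WidthAux.main
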